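/- For every real q ≥ 1/2, with s = (q+1)/2, t = q/2, w = √((2q−1)(q+1))/2 and h = 1 + q + s − 2w, one has h > 0, (2s+1)·h − (w − t)² > 0, h² − (w − t)²·(s + 1/2)⁻²·[(2s+1)·h − (w − t)²] > 0, and the assisted fidelity F(q) := {h² − (w − t)²·(s + 1/2)⁻²·[(2s+1)·h − (w − t)²]}^(−1/2) satisfies F(q) ≥ 1/h = F^tr(q), with strict inequality whenever w ≠ t. -/
import Mathlib


/-- Section V.A, Eq. (25): for every `q ≥ 1/2`, with `s = (q+1)/2`, `t = q/2`,
`w = √((2q−1)(q+1))/2` and `h = 1 + q + s − 2w`, one has `h > 0`,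
`(2s+1)h − (w−t)² > 0`, `h² − (w−t)²(s+1/2)⁻²[(2s+1)h − (w−t)²] > 0`, and the optimal
assisted fidelity `F(q) = {h² − (w−t)²(s+1/2)⁻²[(2s+1)h − (w−t)²]}^(−1/2)` satisfies
`F(q) ≥ 1/h = F^tr(q)`, strictly whenever `w ≠ t`. -/
theorem assisted_fidelity_ge_nonassisted (q : ℝ) (hq : 1/2 ≤ q) :
    let s := (q + 1) / 2
    let t := q / 2
    let w := Real.sqrt ((2*q - 1) * (q + 1)) / 2
    let h := 1 + q + s - 2*w
    let K := h ^ 2 - (w - t) ^ 2 * (s + 1/2)⁻¹ ^ 2 * ((2*s + 1) * h - (w - t) ^ 2)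
    0 < h ∧ 0 < (2*s + 1) * h - (w - t) ^ 2 ∧ 0 < K ∧
      1 / h ≤ K ^ (-(1/2) : ℝ) ∧ (w ≠ t → 1 / h < K ^ (-(1/2) : ℝ)) := by
  intro s t w h K
  have hx : (0:ℝ) ≤ (2*q - 1) * (q + 1) := by nlinarith
  have hw0 : 0 ≤ w := by positivity
  have hw2 : w ^ 2 = (2*q - 1) * (q + 1) / 4 := by
    show (Real.sqrt ((2*q - 1) * (q + 1)) / 2) ^ 2 = _
    rw [div_pow, Real.sq_sqrt hx]; norm_num
  have hq2 : (0:ℝ) < q + 2 := by linarith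
  -- h > 0
  have hhsq : (2*w)^2 < (3*(q+1)/2)^2 := by nlinarith
  have hh : 0 < h := by
    have := lt_of_pow_lt_pow_left₀ 2 (by linarith : (0:ℝ) ≤ 3*(q+1)/2) hhsq
    show 0 < 1 + q + (q+1)/2 - 2*w
    linarith
  -- A := (2s+1)h - (w-t)^2 > 0
  have hAsq : ((q+4)*w)^2 < ((3*q^2+17*q+13)/4)^2 := by nlinarith
  have hA : 0 < (2*s + 1) * h - (w - t) ^ 2 := by
    have h1 := lt_of_pow_lt_pow_left₀ 2 (by nlinarith : (0:ℝ) ≤ (3*q^2+17*q+13)/4) hAsq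
    show 0 < (2*((q+1)/2) + 1) * (1 + q + (q+1)/2 - 2*w) - (w - q/2)^2
    nlinarith [hw2]
  -- B := (q+2)h - 2(w-t)^2 > 0
  have hBsq : (4*w)^2 < (4*q + 7/2)^2 := by nlinarith
  have hB : 0 < (q+2) * h - 2 * (w - t) ^ 2 := by
    have h1 := lt_of_pow_lt_pow_left₀ 2 (by linarith : (0:ℝ) ≤ 4*q + 7/2) hBsq
    show 0 < (q+2) * (1 + q + (q+1)/2 - 2*w) - 2 * (w - q/2)^2
    nlinarith [hw2]
  -- K is a perfect square
  have hKeq : K = (((q+2) * h - 2 * (w - t) ^ 2) / (q+2)) ^ 2 := by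
    show h ^ 2 - (w - t) ^ 2 * ((q+1)/2 + 1/2)⁻¹ ^ 2 * ((2*((q+1)/2) + 1) * h - (w - t) ^ 2)
        = _
    have : ((q+1)/2 + 1/2) = (q+2)/2 := by ring
    rw [this]
    field_simp
    ring
  have hK : 0 < K := by
    rw [hKeq]; positivity
  refine ⟨hh, hA, hK, ?_, ?_⟩
  · -- K ≤ h^2
    have hKle : K ≤ h ^ 2 := by
      have : 0 ≤ (w - t) ^ 2 * (s + 1/2)⁻¹ ^ 2 * ((2*s + 1) * h - (w - t) ^ 2) := by
        positivity
      simp only [K]; linarith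
    have hsqrt : Real.sqrt K ≤ h := by
      calc Real.sqrt K ≤ Real.sqrt (h ^ 2) := Real.sqrt_le_sqrt hKle
        _ = h := by rw [Real.sqrt_sq hh.le]
    rw [Real.rpow_neg hK.le, ← Real.sqrt_eq_rpow, one_div]
    exact inv_anti₀ (Real.sqrt_pos.2 hK) hsqrt
  · intro hwt
    have hd : 0 < (w - t) ^ 2 := pow_two_pos_of_ne_zero (sub_ne_zero.mpr hwt)
    have hKlt : K < h ^ 2 := by
      have : 0 < (w - t) ^ 2 * (s + 1/2)⁻¹ ^ 2 * ((2*s + 1) * h - (w - t) ^ 2) := by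
        have hs2 : (0:ℝ) < (s + 1/2)⁻¹ ^ 2 := by
          have : s + 1/2 = (q+2)/2 := by show (q+1)/2 + 1/2 = (q+2)/2; ring
          rw [this]; positivity
        exact mul_pos (mul_pos hd hs2) hA
      simp only [K]; linarith
    have hsqrt : Real.sqrt K < h := by
      calc Real.sqrt K < Real.sqrt (h ^ 2) :=
            Real.sqrt_lt_sqrt hK.le hKlt
        _ = h := by rw [Real.sqrt_sq hh.le]
    rw [Real.rpow_neg hK.le, ← Real.sqrt_eq_rpow, one_div]
    exact inv_strictAnti₀ (Real.sqrt_pos.2 hK) hsqrt
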